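/- Let S = ⟨g₁, …, g_{n−k}⟩ be a subgroup of the n-qubit Pauli group G_n generated by n−k independent, mutually commuting elements, and suppose −I ∉ S. Then the joint fixed subspace V_S = { v ∈ ℂ^{2^n} : s v = v for all s ∈ S } is a vector subspace of dimension 2^k. -/

import Mathlib

open scoped Matrix

noncomputable section

/-- The four Pauli matrices `I, σx, σy, σz` as `2 × 2` complex matrices. -/
def pauliMatrix : Fin 4 → Matrix (Fin 2) (Fin 2) ℂ :=
  ![1, !![0, 1; 1, 0], !![0, -Complex.I; Complex.I, 0], !![1, 0; 0, -1]]

/-- The `n`-fold tensor (Kronecker) product of `2 × 2` matrices, as a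
`2^n × 2^n` matrix indexed by `Fin n → Fin 2`. -/
def nTensor (n : ℕ) (f : Fin n → Matrix (Fin 2) (Fin 2) ℂ) :
    Matrix (Fin n → Fin 2) (Fin n → Fin 2) ℂ :=
  fun x y => ∏ i, f i (x i) (y i)

/-- Membership in the `n`-qubit Pauli group: a prefactor `±1, ±i` times an
`n`-fold tensor product of Pauli matrices. -/
def IsPauliGroupElem (n : ℕ) (A : Matrix (Fin n → Fin 2) (Fin n → Fin 2) ℂ) : Prop :=
  ∃ α : ℂ, (α = 1 ∨ α = -1 ∨ α = Complex.I ∨ α = -Complex.I) ∧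
    ∃ p : Fin n → Fin 4, A = α • nTensor n fun i => pauliMatrix (p i)

/-- The joint fixed subspace `V_S = {v | s v = v for all s ∈ S}` of a set `S` of matrices. -/
def fixedSubspace (n : ℕ) (S : Set (Matrix (Fin n → Fin 2) (Fin n → Fin 2) ℂ)) :
    Submodule ℂ ((Fin n → Fin 2) → ℂ) where
  carrier := {v | ∀ s ∈ S, s.mulVec v = v}
  add_mem' := by
    intro a b ha hb s hs
    rw [Matrix.mulVec_add, ha s hs, hb s hs]
  zero_mem' := by
    intro s hs
    rw [Matrix.mulVec_zero]
  smul_mem' := by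
    intro c a ha s hs
    rw [Matrix.mulVec_smul, ha s hs]

def IsPhase (α : ℂ) : Prop := α = 1 ∨ α = -1 ∨ α = Complex.I ∨ α = -Complex.I

lemma nTensor_mul (n : ℕ) (f g : Fin n → Matrix (Fin 2) (Fin 2) ℂ) :
    nTensor n f * nTensor n g = nTensor n (fun i => f i * g i) := by
  ext x y
  simp only [nTensor, Matrix.mul_apply, ← Finset.prod_mul_distrib]
  rw [Finset.prod_univ_sum]
  simp [Fintype.piFinset_univ]

lemma nTensor_one (n : ℕ) : nTensor n (fun _ => (1 : Matrix (Fin 2) (Fin 2) ℂ)) = 1 := by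
  ext x y
  simp only [nTensor, Matrix.one_apply]
  by_cases h : x = y
  · subst h; simp
  · rw [if_neg h]
    obtain ⟨i, hi⟩ := Function.ne_iff.mp h
    exact Finset.prod_eq_zero (Finset.mem_univ i) (by simp [Matrix.one_apply, hi])

lemma trace_nTensor (n : ℕ) (f : Fin n → Matrix (Fin 2) (Fin 2) ℂ) :
    (nTensor n f).trace = ∏ i, (f i).trace := by
  simp only [Matrix.trace, Matrix.diag, nTensor]
  rw [Finset.prod_univ_sum]
  simp [Fintype.piFinset_univ]

lemma pauli_mul (p q : Fin 4) : ∃ β : ℂ, IsPhase β ∧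
    ∃ r : Fin 4, pauliMatrix p * pauliMatrix q = β • pauliMatrix r := by
  have hI : (Complex.I : ℂ) * Complex.I = -1 := Complex.I_mul_I
  fin_cases p <;> fin_cases q
  · exact ⟨1, Or.inl rfl, 0, by simp [pauliMatrix]⟩
  · exact ⟨1, Or.inl rfl, 1, by simp [pauliMatrix]⟩
  · exact ⟨1, Or.inl rfl, 2, by simp [pauliMatrix]⟩
  · exact ⟨1, Or.inl rfl, 3, by simp [pauliMatrix]⟩
  · exact ⟨1, Or.inl rfl, 1, by simp [pauliMatrix]⟩
  · exact ⟨1, Or.inl rfl, 0, by ext i j; fin_cases i <;> fin_cases j <;> simp [pauliMatrix, Matrix.mul_apply, Fin.sum_univ_two]⟩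
  · exact ⟨Complex.I, Or.inr (Or.inr (Or.inl rfl)), 3, by ext i j; fin_cases i <;> fin_cases j <;> simp [pauliMatrix, Matrix.mul_apply, Fin.sum_univ_two, hI]⟩
  · exact ⟨-Complex.I, Or.inr (Or.inr (Or.inr rfl)), 2, by ext i j; fin_cases i <;> fin_cases j <;> simp [pauliMatrix, Matrix.mul_apply, Fin.sum_univ_two, hI]⟩
  · exact ⟨1, Or.inl rfl, 2, by simp [pauliMatrix]⟩
  · exact ⟨-Complex.I, Or.inr (Or.inr (Or.inr rfl)), 3, by ext i j; fin_cases i <;> fin_cases j <;> simp [pauliMatrix, Matrix.mul_apply, Fin.sum_univ_two, hI]⟩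
  · exact ⟨1, Or.inl rfl, 0, by ext i j; fin_cases i <;> fin_cases j <;> simp [pauliMatrix, Matrix.mul_apply, Fin.sum_univ_two, hI]⟩
  · exact ⟨Complex.I, Or.inr (Or.inr (Or.inl rfl)), 1, by ext i j; fin_cases i <;> fin_cases j <;> simp [pauliMatrix, Matrix.mul_apply, Fin.sum_univ_two, hI]⟩
  · exact ⟨1, Or.inl rfl, 3, by simp [pauliMatrix]⟩
  · exact ⟨Complex.I, Or.inr (Or.inr (Or.inl rfl)), 2, by ext i j; fin_cases i <;> fin_cases j <;> simp [pauliMatrix, Matrix.mul_apply, Fin.sum_univ_two, hI]⟩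
  · exact ⟨-Complex.I, Or.inr (Or.inr (Or.inr rfl)), 1, by ext i j; fin_cases i <;> fin_cases j <;> simp [pauliMatrix, Matrix.mul_apply, Fin.sum_univ_two, hI]⟩
  · exact ⟨1, Or.inl rfl, 0, by ext i j; fin_cases i <;> fin_cases j <;> simp [pauliMatrix, Matrix.mul_apply, Fin.sum_univ_two]⟩

lemma pauli_sq (p : Fin 4) : pauliMatrix p * pauliMatrix p = 1 := by
  fin_cases p
  · simp [pauliMatrix]
  all_goals ext i j <;> fin_cases i <;> fin_cases j <;>
    simp [pauliMatrix, Matrix.mul_apply, Fin.sum_univ_two, Complex.I_mul_I]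

lemma trace_pauli (p : Fin 4) : (pauliMatrix p).trace = if p = 0 then 2 else 0 := by
  fin_cases p <;> simp [pauliMatrix, Matrix.trace, Matrix.diag, Fin.sum_univ_two]

open Subgroup in
lemma elemAbelian_card {G : Type*} [Group G] {ι : Type*} [Fintype ι] [DecidableEq ι]
    (g : ι → G) (hsq : ∀ i, g i * g i = 1) (hcomm : ∀ i j, g i * g j = g j * g i)
    (hindep : ∀ i : ι,
      closure (Set.range fun j : {j : ι // j ≠ i} => g j) < closure (Set.range g)) :
    Nat.card (closure (Set.range g)) = 2 ^ Fintype.card ι ∧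
      ∀ x ∈ closure (Set.range g), x * x = 1 := by
  set H := closure (Set.range g) with hH
  letI : CommGroup H := Subgroup.closureCommGroupOfComm
    (by rintro x ⟨i, rfl⟩ y ⟨j, rfl⟩; exact hcomm i j)
  set gh : ι → H := fun i => ⟨g i, subset_closure ⟨i, rfl⟩⟩ with hgh
  have hsqh : ∀ i, gh i * gh i = 1 := fun i => Subtype.ext (hsq i)
  set φ : (ι → ZMod 2) → H := fun v => ∏ i, gh i ^ (v i).val with hφ
  have hz2 : ∀ x : ZMod 2, x = 0 ∨ x = 1 := by decide
  have hpow : ∀ a : H, a * a = 1 → ∀ x y : ZMod 2,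
      a ^ (x + y).val = a ^ x.val * a ^ y.val := by
    intro a ha x y
    rcases hz2 x with rfl | rfl <;> rcases hz2 y with rfl | rfl
    · simp
    · simp
    · simp
    · rw [show ((1 : ZMod 2) + 1) = 0 from rfl]
      simp [ZMod.val_one, ha]
  have φ_add : ∀ v w, φ (v + w) = φ v * φ w := by
    intro v w
    rw [hφ]
    simp only
    rw [← Finset.prod_mul_distrib]
    exact Finset.prod_congr rfl fun i _ => hpow (gh i) (hsqh i) (v i) (w i)
  have φ_zero : φ 0 = 1 := by simp [hφ]
  have φ_sq : ∀ v, φ v * φ v = 1 := by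
    intro v
    rw [← φ_add]
    have : v + v = 0 := by
      funext i; simp only [Pi.add_apply, Pi.zero_apply]
      rcases hz2 (v i) with h | h <;> rw [h] <;> decide
    rw [this, φ_zero]
  have φ_single : ∀ j, φ (Pi.single j 1) = gh j := by
    intro j
    rw [hφ]
    simp only
    rw [Finset.prod_eq_single j]
    · simp [ZMod.val_one]
    · intro i _ hij; simp [Pi.single_eq_of_ne hij]
    · simp
  have hsurj : ∀ x : G, x ∈ H → ∃ v, (φ v : G) = x := by
    intro x hx
    rw [hH] at hx
    induction hx using closure_induction with
    | mem y hy =>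
      obtain ⟨i, rfl⟩ := hy
      exact ⟨Pi.single i 1, by rw [φ_single]⟩
    | one => exact ⟨0, by rw [φ_zero]; rfl⟩
    | mul y z hy hz ihy ihz =>
      obtain ⟨v, hv⟩ := ihy; obtain ⟨w, hw⟩ := ihz
      exact ⟨v + w, by rw [φ_add]; push_cast [hv, hw]; rfl⟩
    | inv y hy ihy =>
      obtain ⟨v, hv⟩ := ihy
      refine ⟨v, ?_⟩
      have h1 : (φ v)⁻¹ = φ v := inv_eq_of_mul_eq_one_right (φ_sq v)
      rw [← hv]
      conv_lhs => rw [← h1]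
      simp
  have hallsq : ∀ x ∈ H, x * x = 1 := by
    intro x hx
    obtain ⟨v, hv⟩ := hsurj x hx
    have h2 : (φ v : G) * (φ v : G) = 1 := by
      have := congrArg (Subtype.val) (φ_sq v)
      simpa using this
    rw [← hv]; exact h2
  refine ⟨?_, hallsq⟩
  have hker : ∀ u, φ u = 1 → u = 0 := by
    intro u hu
    by_contra hne
    obtain ⟨j, hj⟩ := Function.ne_iff.mp hne
    have huj : u j = 1 := by
      rcases hz2 (u j) with h | h
      · exact absurd h hj
      · exact h
    -- g j lies in the closure of the other generators
    have hprod : gh j ^ (u j).val * ∏ i ∈ Finset.univ.erase j, gh i ^ (u i).val = 1 := by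
      rw [Finset.mul_prod_erase Finset.univ (fun i => gh i ^ (u i).val) (Finset.mem_univ j)]
      exact hu
    have hgj : gh j = (∏ i ∈ Finset.univ.erase j, gh i ^ (u i).val)⁻¹ := by
      rw [huj, ZMod.val_one, pow_one] at hprod
      exact eq_inv_of_mul_eq_one_left hprod
    set K : Subgroup G := closure (Set.range fun j' : {j' : ι // j' ≠ j} => g j') with hK
    have hgjK : g j ∈ K := by
      have hmem : (∏ i ∈ Finset.univ.erase j, gh i ^ (u i).val) ∈ K.comap H.subtype := by
        refine prod_mem fun i hi => pow_mem ?_ _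
        show (gh i : G) ∈ K
        exact subset_closure ⟨⟨i, Finset.ne_of_mem_erase hi⟩, rfl⟩
      have h5 : gh j ∈ K.comap H.subtype := hgj ▸ inv_mem hmem
      exact h5
    have hle : H ≤ K := by
      rw [hH, closure_le]
      rintro x ⟨m, rfl⟩
      by_cases hm : m = j
      · subst hm; exact hgjK
      · exact subset_closure ⟨⟨m, hm⟩, rfl⟩
    exact absurd (lt_of_lt_of_le (hindep j) hle).false id
  have hinj : Function.Injective φ := by
    intro v w hvw
    have h1 : φ (v + w) = 1 := by rw [φ_add, hvw, φ_sq]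
    have h2 := hker _ h1
    funext i
    have : v i + w i = 0 := congrFun h2 i
    have : ∀ a b : ZMod 2, a + b = 0 → a = b := by decide
    exact this _ _ (congrFun h2 i)
  have hbij : Function.Bijective φ := by
    refine ⟨hinj, fun x => ?_⟩
    obtain ⟨v, hv⟩ := hsurj x x.2
    exact ⟨v, Subtype.ext hv⟩
  rw [← Nat.card_eq_of_bijective φ hbij, Nat.card_eq_fintype_card, Fintype.card_fun,
    ZMod.card]

lemma IsPhase.one : IsPhase 1 := Or.inl rfl

lemma IsPhase.mul {α β : ℂ} (ha : IsPhase α) (hb : IsPhase β) : IsPhase (α * β) := by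
  unfold IsPhase at *
  rcases ha with rfl | rfl | rfl | rfl <;> rcases hb with rfl | rfl | rfl | rfl <;>
    simp [Complex.I_mul_I] <;> ring_nf <;> simp [Complex.I_sq]

lemma IsPhase.ne_zero {α : ℂ} (ha : IsPhase α) : α ≠ 0 := by
  rcases ha with rfl | rfl | rfl | rfl <;> simp [Complex.I_ne_zero]

lemma nTensor_smul (n : ℕ) (c : Fin n → ℂ) (f : Fin n → Matrix (Fin 2) (Fin 2) ℂ) :
    nTensor n (fun i => c i • f i) = (∏ i, c i) • nTensor n f := by
  ext x y
  simp [nTensor, Finset.prod_mul_distrib, mul_comm]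

lemma pauliMatrix_zero : pauliMatrix 0 = 1 := rfl

lemma IsPauliGroupElem.one' (n : ℕ) : IsPauliGroupElem n 1 :=
  ⟨1, Or.inl rfl, fun _ => 0, by simp [pauliMatrix_zero, nTensor_one]⟩

lemma IsPauliGroupElem.mul {n : ℕ} {A B : Matrix (Fin n → Fin 2) (Fin n → Fin 2) ℂ}
    (hA : IsPauliGroupElem n A) (hB : IsPauliGroupElem n B) : IsPauliGroupElem n (A * B) := by
  obtain ⟨α, hα, p, rfl⟩ := hA
  obtain ⟨β, hβ, q, rfl⟩ := hB
  choose γ hγ r hr using fun i => pauli_mul (p i) (q i)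
  refine ⟨α * β * ∏ i, γ i, ?_, r, ?_⟩
  · exact (IsPhase.mul hα hβ).mul (Finset.prod_induction γ IsPhase
      (fun _ _ => IsPhase.mul) IsPhase.one (fun i _ => hγ i))
  · rw [Matrix.smul_mul, Matrix.mul_smul, smul_smul, nTensor_mul]
    have : (fun i => pauliMatrix (p i) * pauliMatrix (q i)) = fun i => γ i • pauliMatrix (r i) :=
      funext fun i => hr i
    rw [this, nTensor_smul, smul_smul, mul_assoc]

/-- A Pauli group element with nonzero trace is a phase times the identity. -/
lemma IsPauliGroupElem.trace_ne_zero {n : ℕ} {A : Matrix (Fin n → Fin 2) (Fin n → Fin 2) ℂ}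
    (hA : IsPauliGroupElem n A) (ht : A.trace ≠ 0) : ∃ α : ℂ, IsPhase α ∧ A = α • 1 := by
  obtain ⟨α, hα, p, rfl⟩ := hA
  have hp : ∀ i, p i = 0 := by
    by_contra h
    push_neg at h
    obtain ⟨i, hi⟩ := h
    apply ht
    rw [Matrix.trace_smul, trace_nTensor]
    rw [Finset.prod_eq_zero (Finset.mem_univ i) (by rw [trace_pauli, if_neg hi]), smul_zero]
  refine ⟨α, hα, ?_⟩
  have : (fun i => pauliMatrix (p i)) = fun _ => (1 : Matrix (Fin 2) (Fin 2) ℂ) :=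
    funext fun i => by rw [hp i, pauliMatrix_zero]
  rw [this, nTensor_one]

lemma sum_mulVec' {ι m' : Type*} [Fintype m'] (s : Finset ι)
    (A : ι → Matrix m' m' ℂ) (x : m' → ℂ) :
    (∑ i ∈ s, A i) *ᵥ x = ∑ i ∈ s, A i *ᵥ x := by
  ext j
  simp only [Matrix.mulVec, dotProduct, Matrix.sum_apply, Finset.sum_apply,
    Finset.sum_mul]
  exact Finset.sum_comm

/-- If `S = ⟨g₁, …, g_{n−k}⟩` is generated by `n − k` independent commuting elements of the
`n`-qubit Pauli group and `−I ∉ S`, then the joint fixed subspace `V_S` has dimension `2^k`. -/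
theorem stmt0 (n k : ℕ) (hk : k ≤ n)
    (g : Fin (n - k) → Matrix.unitaryGroup (Fin n → Fin 2) ℂ)
    (hpauli : ∀ i, IsPauliGroupElem n (g i))
    (hcomm : ∀ i j, g i * g j = g j * g i)
    (hindep : ∀ i : Fin (n - k),
      Subgroup.closure (Set.range fun j : {j : Fin (n - k) // j ≠ i} => g j)
        < Subgroup.closure (Set.range g))
    (S : Subgroup (Matrix.unitaryGroup (Fin n → Fin 2) ℂ))
    (hS : S = Subgroup.closure (Set.range g))
    (hnegI : ∀ s ∈ S, (s : Matrix (Fin n → Fin 2) (Fin n → Fin 2) ℂ) ≠ -1) :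
    Module.finrank ℂ
      (fixedSubspace n
        ((fun u : Matrix.unitaryGroup (Fin n → Fin 2) ℂ =>
          (u : Matrix (Fin n → Fin 2) (Fin n → Fin 2) ℂ)) '' (S : Set _))) = 2 ^ k := by
  classical
  -- each generator squares to one
  have phase_sq : ∀ α : ℂ, (α = 1 ∨ α = -1 ∨ α = Complex.I ∨ α = -Complex.I) →
      α * α = 1 ∨ α * α = -1 := by
    rintro α (rfl | rfl | rfl | rfl) <;> simp [Complex.I_mul_I]
  have hsq : ∀ i, g i * g i = 1 := by
    intro i
    obtain ⟨α, hα, p, hgi⟩ := hpauli i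
    have hmm : ((g i : Matrix (Fin n → Fin 2) (Fin n → Fin 2) ℂ)) * (g i : Matrix (Fin n → Fin 2) (Fin n → Fin 2) ℂ) = (α * α) • 1 := by
      rw [hgi, Matrix.smul_mul, Matrix.mul_smul, smul_smul, nTensor_mul]
      congr 1
      rw [show (fun j => pauliMatrix (p j) * pauliMatrix (p j))
          = fun _ => (1 : Matrix (Fin 2) (Fin 2) ℂ) from funext fun j => pauli_sq (p j)]
      exact nTensor_one n
    have hmem : g i * g i ∈ S := by
      rw [hS]
      exact mul_mem (Subgroup.subset_closure ⟨i, rfl⟩) (Subgroup.subset_closure ⟨i, rfl⟩)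
    rcases phase_sq α hα with h1 | h1
    · apply Subtype.ext
      show ((g i : Matrix (Fin n → Fin 2) (Fin n → Fin 2) ℂ)) * (g i : Matrix (Fin n → Fin 2) (Fin n → Fin 2) ℂ) = (1 : Matrix (Fin n → Fin 2) (Fin n → Fin 2) ℂ)
      rw [hmm, h1, one_smul]
    · exfalso
      apply hnegI _ hmem
      show ((g i : Matrix (Fin n → Fin 2) (Fin n → Fin 2) ℂ)) * (g i : Matrix (Fin n → Fin 2) (Fin n → Fin 2) ℂ) = (-1 : Matrix (Fin n → Fin 2) (Fin n → Fin 2) ℂ)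
      rw [hmm, h1, neg_smul, one_smul]
  obtain ⟨hcard0, hsq_all0⟩ := elemAbelian_card g hsq hcomm hindep
  rw [← hS] at hcard0 hsq_all0
  rw [Fintype.card_fin] at hcard0
  have hSfin : Finite ↥S := by
    have : Nat.card ↥S ≠ 0 := by rw [hcard0]; positivity
    exact (Nat.card_ne_zero.mp this).2
  haveI := hSfin
  haveI : Fintype ↥S := Fintype.ofFinite _
  have hcard : (Fintype.card ↥S : ℕ) = 2 ^ (n - k) := by
    rw [← Nat.card_eq_fintype_card, hcard0]
  -- every element of S is a Pauli group element
  have hpauliS : ∀ s ∈ S, IsPauliGroupElem n (s : Matrix (Fin n → Fin 2) (Fin n → Fin 2) ℂ) := by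
    intro s hs
    rw [hS] at hs
    induction hs using Subgroup.closure_induction with
    | mem y hy => obtain ⟨i, rfl⟩ := hy; exact hpauli i
    | one => exact IsPauliGroupElem.one' n
    | mul y z hy hz ihy ihz => exact ihy.mul ihz
    | inv y hy ihy =>
      have : y⁻¹ = y := inv_eq_of_mul_eq_one_right (hsq_all0 y (hS ▸ hy))
      rw [this]; exact ihy
  -- the sum over the group
  set T : Matrix (Fin n → Fin 2) (Fin n → Fin 2) ℂ := ∑ s : ↥S, ((s : Matrix.unitaryGroup (Fin n → Fin 2) ℂ) : Matrix (Fin n → Fin 2) (Fin n → Fin 2) ℂ) with hT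
  have habs : ∀ u ∈ S, (u : Matrix (Fin n → Fin 2) (Fin n → Fin 2) ℂ) * T = T := by
    intro u hu
    rw [hT, Finset.mul_sum]
    exact Fintype.sum_equiv (Equiv.mulLeft (⟨u, hu⟩ : ↥S))
      (fun s => (u : Matrix (Fin n → Fin 2) (Fin n → Fin 2) ℂ) * ((s : Matrix.unitaryGroup (Fin n → Fin 2) ℂ) : Matrix (Fin n → Fin 2) (Fin n → Fin 2) ℂ)) (fun s => ((s : Matrix.unitaryGroup (Fin n → Fin 2) ℂ) : Matrix (Fin n → Fin 2) (Fin n → Fin 2) ℂ)) (fun s => rfl)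
  set c : ℂ := ((2 : ℂ) ^ (n - k))⁻¹ with hc
  have hc2 : ((2 : ℂ) ^ (n - k)) ≠ 0 := pow_ne_zero _ two_ne_zero
  set P : Matrix (Fin n → Fin 2) (Fin n → Fin 2) ℂ := c • T with hP
  -- T acts as card • id on fixed vectors
  have setmem : ∀ u : ↥S, ((u : Matrix.unitaryGroup (Fin n → Fin 2) ℂ) : Matrix (Fin n → Fin 2) (Fin n → Fin 2) ℂ) ∈
      ((fun u : Matrix.unitaryGroup (Fin n → Fin 2) ℂ => (u : Matrix (Fin n → Fin 2) (Fin n → Fin 2) ℂ)) '' (S : Set _)) := fun u => ⟨u, u.2, rfl⟩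
  have hproj : LinearMap.IsProj
      (fixedSubspace n ((fun u : Matrix.unitaryGroup (Fin n → Fin 2) ℂ => (u : Matrix (Fin n → Fin 2) (Fin n → Fin 2) ℂ)) '' (S : Set _))) (Matrix.toLin' P) := by
    constructor
    · intro x
      intro A hA
      obtain ⟨u, hu, rfl⟩ := hA
      rw [Matrix.toLin'_apply, Matrix.mulVec_mulVec, hP, Matrix.mul_smul, habs u hu]
    · intro x hx
      rw [Matrix.toLin'_apply, hP, Matrix.smul_mulVec, hT, sum_mulVec']
      have : ∀ s : ↥S, ((s : Matrix.unitaryGroup (Fin n → Fin 2) ℂ) : Matrix (Fin n → Fin 2) (Fin n → Fin 2) ℂ) *ᵥ x = x := fun s => hx _ (setmem s)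
      rw [Finset.sum_congr rfl fun s _ => this s, Finset.sum_const, Finset.card_univ]
      rw [← Nat.cast_smul_eq_nsmul ℂ, hcard, hc]
      push_cast
      rw [smul_smul, inv_mul_cancel₀ hc2, one_smul]
  -- trace of T is 2^n
  have htrace : T.trace = (2 : ℂ) ^ n := by
    rw [hT, Matrix.trace_sum]
    rw [Finset.sum_eq_single (1 : ↥S)]
    · show ((1 : Matrix.unitaryGroup (Fin n → Fin 2) ℂ) : Matrix (Fin n → Fin 2) (Fin n → Fin 2) ℂ).trace = _
      rw [OneMemClass.coe_one, Matrix.trace_one]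
      simp [Fintype.card_fun]
    · intro s _ hs1
      by_contra ht
      obtain ⟨α, hph, hα⟩ := (hpauliS (s : Matrix.unitaryGroup (Fin n → Fin 2) ℂ) s.2).trace_ne_zero ht
      have hss : ((s : Matrix.unitaryGroup (Fin n → Fin 2) ℂ) : Matrix (Fin n → Fin 2) (Fin n → Fin 2) ℂ) * ((s : Matrix.unitaryGroup (Fin n → Fin 2) ℂ) : Matrix (Fin n → Fin 2) (Fin n → Fin 2) ℂ) = 1 := by
        have h5 : ((s : Matrix.unitaryGroup (Fin n → Fin 2) ℂ) * (s : Matrix.unitaryGroup (Fin n → Fin 2) ℂ) : Matrix.unitaryGroup (Fin n → Fin 2) ℂ) = 1 := hsq_all0 _ s.2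
        calc ((s : Matrix.unitaryGroup (Fin n → Fin 2) ℂ) : Matrix (Fin n → Fin 2) (Fin n → Fin 2) ℂ) * ((s : Matrix.unitaryGroup (Fin n → Fin 2) ℂ) : Matrix (Fin n → Fin 2) (Fin n → Fin 2) ℂ) = (((s : Matrix.unitaryGroup (Fin n → Fin 2) ℂ) * (s : Matrix.unitaryGroup (Fin n → Fin 2) ℂ) : Matrix.unitaryGroup (Fin n → Fin 2) ℂ) : Matrix (Fin n → Fin 2) (Fin n → Fin 2) ℂ) := rfl
        _ = ((1 : Matrix.unitaryGroup (Fin n → Fin 2) ℂ) : Matrix (Fin n → Fin 2) (Fin n → Fin 2) ℂ) := by rw [h5]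
        _ = 1 := OneMemClass.coe_one _
      rw [hα, Matrix.smul_mul, Matrix.mul_smul, smul_smul, one_mul] at hss
      have hα2 : α * α = 1 := by
        have := congrFun (congrFun hss (fun _ => 0)) (fun _ => 0)
        simpa [Matrix.one_apply] using this
      rcases mul_self_eq_one_iff.mp hα2 with rfl | rfl
      · exact hs1 (Subtype.ext (Subtype.ext (by rw [hα, one_smul]; rfl)))
      · exact hnegI _ s.2 (by rw [hα, neg_smul, one_smul])
    · intro h; exact absurd (Finset.mem_univ _) h
  -- conclude via the trace of the projection
  have := hproj.trace
  rw [LinearMap.trace_eq_matrix_trace ℂ (Pi.basisFun ℂ _), LinearMap.toMatrix_eq_toMatrix',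
    LinearMap.toMatrix'_toLin'] at this
  rw [hP, Matrix.trace_smul, htrace, hc, smul_eq_mul] at this
  have h2n : (2 : ℂ) ^ n = 2 ^ (n - k) * 2 ^ k := by
    rw [← pow_add]
    congr 1
    omega
  rw [h2n, inv_mul_cancel_left₀ hc2] at this
  have : ((Module.finrank ℂ (fixedSubspace n
      ((fun u : Matrix.unitaryGroup (Fin n → Fin 2) ℂ => (u : Matrix (Fin n → Fin 2) (Fin n → Fin 2) ℂ)) '' (S : Set _))) : ℂ)) = ((2 ^ k : ℕ) : ℂ) := by
    rw [← this]; push_cast; ring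
  exact_mod_cast this
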